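/- Let G be a group, H a subnormal subgroup of G, and K a subgroup of finite index in G. Then |HK:K| divides |G:K|. -/

import Mathlib

open Subgroup
open scoped Pointwise

/-- `H` is subnormal in `G` if there is a finite chain
`H = c 0 ⊴ c 1 ⊴ ... ⊴ c n = G` with each term normal in the next. -/
def IsSubnormal {G : Type*} [Group G] (H : Subgroup G) : Prop :=
  ∃ (n : ℕ) (c : Fin (n + 1) → Subgroup G),
    c 0 = H ∧ c (Fin.last n) = ⊤ ∧
    ∀ i : Fin n, c i.castSucc ≤ c i.succ ∧ ((c i.castSucc).subgroupOf (c i.succ)).Normal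


/-- Coset-level second isomorphism: if `H` is normal then the cosets of `K ∩ H` in `H`
biject with the cosets of `K` in `H ⊔ K`. -/
noncomputable def quotEquivOfNormalLeft {G : Type*} [Group G] (H K : Subgroup G) [H.Normal] :
    H ⧸ K.subgroupOf H ≃ (H ⊔ K : Subgroup G) ⧸ K.subgroupOf (H ⊔ K) := by
  refine Equiv.ofBijective (Quotient.map' (Subgroup.inclusion le_sup_left) ?_) ⟨?_, ?_⟩
  · intro a b hab
    rw [QuotientGroup.leftRel_apply] at hab ⊢
    exact hab
  · intro a b
    refine Quotient.inductionOn₂' a b fun x y h => ?_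
    rw [Quotient.map'_mk'', Quotient.map'_mk''] at h
    refine Quotient.sound' ?_
    rw [QuotientGroup.leftRel_apply]
    have := Quotient.exact' h
    rw [QuotientGroup.leftRel_apply] at this
    exact this
  · intro x
    refine Quotient.inductionOn' x fun z => ?_
    obtain ⟨z, hz⟩ := z
    have hz' : z ∈ (H : Set G) * (K : Set G) := by
      rwa [← Subgroup.normal_mul H K, SetLike.mem_coe]
    obtain ⟨h, hh, k, hk, rfl⟩ := hz'
    refine ⟨Quotient.mk'' ⟨h, hh⟩, ?_⟩
    rw [Quotient.map'_mk'']
    refine Quotient.sound' ?_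
    rw [QuotientGroup.leftRel_apply]
    show ((Subgroup.inclusion le_sup_left ⟨h, hh⟩ : (H ⊔ K : Subgroup G)) : G)⁻¹ * (h * k) ∈ K
    simp only [InvMemClass.coe_inv, Subgroup.coe_inclusion, inv_mul_cancel_left]
    exact hk

theorem relindex_eq_relindex_sup' {G : Type*} [Group G] (H K : Subgroup G) [H.Normal] :
    K.relIndex H = K.relIndex (H ⊔ K) :=
  Nat.card_congr (quotEquivOfNormalLeft H K)

theorem relindex_dvd_relindex_of_normal_step {G : Type*} [Group G] (K A B : Subgroup G)
    (hAB : A ≤ B) (hN : (A.subgroupOf B).Normal) : K.relIndex A ∣ K.relIndex B := by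
  rw [← Subgroup.relIndex_subgroupOf hAB]
  have : K.relIndex B = (K.subgroupOf B).index := rfl
  rw [this]
  calc (K.subgroupOf B).relIndex (A.subgroupOf B)
      = (K.subgroupOf B).relIndex (A.subgroupOf B ⊔ K.subgroupOf B) :=
        relindex_eq_relindex_sup' _ _
    _ ∣ (K.subgroupOf B).index := Subgroup.relIndex_dvd_index_of_le le_sup_right

/-- If `H` is subnormal in `G` and `K ≤ G` has finite index, then `|HK:K|` divides `|G:K|`.
Here `|HK:K| = |H : H ∩ K|` is `K.relindex H`. -/
theorem relindex_dvd_index_of_subnormal {G : Type*} [Group G] (H K : Subgroup G)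
    (hH : _root_.IsSubnormal H) (hK : K.index ≠ 0) :
    K.relIndex H ∣ K.index := by
  obtain ⟨n, c, h0, hlast, hstep⟩ := hH
  suffices h : ∀ i : Fin (n + 1), K.relIndex (c i) ∣ K.index by
    have := h 0; rwa [h0] at this
  intro i
  induction i using Fin.reverseInduction with
  | last => rw [hlast, Subgroup.relIndex_top_right]
  | cast i ih =>
      exact dvd_trans
        (relindex_dvd_relindex_of_normal_step K _ _ (hstep i).1 (hstep i).2) ih
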